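/- For n ≥ 1, the number of Fishburn permutations of length n avoiding both classical patterns 321 and 3142 equals 2^{n-1}. -/

import Mathlib

/-- A permutation `π` of `Fin n` contains the classical pattern `p` (given as a
function `Fin k → ℕ` listing the pattern's entries). -/
def Contains {n k : ℕ} (π : Equiv.Perm (Fin n)) (p : Fin k → ℕ) : Prop :=
  ∃ f : Fin k → Fin n, StrictMono f ∧ ∀ i j, p i < p j ↔ π (f i) < π (f j)

/-- Classical pattern avoidance. -/
def Avoids {n k : ℕ} (π : Equiv.Perm (Fin n)) (p : Fin k → ℕ) : Prop :=
  ¬ Contains π p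

/-- A permutation is Fishburn if there are no indices `i < j` with
`π i, π (i+1), π j` forming a 231 pattern and `π i = π j + 1`. -/
def IsFishburn {n : ℕ} (π : Equiv.Perm (Fin n)) : Prop :=
  ¬ ∃ (i j : ℕ) (hij : i + 1 < j) (hj : j < n),
      π ⟨i, by omega⟩ < π ⟨i + 1, by omega⟩ ∧
      π ⟨j, hj⟩ < π ⟨i, by omega⟩ ∧
      (π ⟨i, by omega⟩ : ℕ) = (π ⟨j, hj⟩ : ℕ) + 1

attribute [local instance] Classical.propDecidable

noncomputable section FBsec

namespace FB

variable (m : ℕ) (T : Finset (Fin m))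

/-- `t` is a block end. -/
def C (t : ℕ) : Prop := t = m ∨ ∃ ht : t < m, (⟨t, ht⟩ : Fin m) ∈ T

/-- `s` is a block start. -/
def D (s : ℕ) : Prop := s = 0 ∨ ∃ hs : s - 1 < m, (⟨s - 1, hs⟩ : Fin m) ∈ T

lemma D0 : D m T 0 := Or.inl rfl

lemma exP (i : ℕ) : ∃ t, i ≤ t ∧ (C m T t ∨ m ≤ t) :=
  ⟨m + i, by omega, Or.inr (by omega)⟩

def endN (i : ℕ) : ℕ := Nat.find (exP m T i)

def startN (v : ℕ) : ℕ := Nat.findGreatest (D m T) v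

/-- the permutation, as a function on ℕ. -/
def f (i : ℕ) : ℕ := if D m T i then endN m T i else i - 1

/-- the inverse, as a function on ℕ. -/
def g (v : ℕ) : ℕ := if C m T v then startN m T v else v + 1

variable {m T}

lemma le_endN (i : ℕ) : i ≤ endN m T i := (Nat.find_spec (exP m T i)).1

lemma endN_le {i : ℕ} (h : i ≤ m) : endN m T i ≤ m :=
  Nat.find_le ⟨h, Or.inr le_rfl⟩

lemma C_endN {i : ℕ} (h : i ≤ m) : C m T (endN m T i) := by
  rcases (Nat.find_spec (exP m T i)).2 with hc | hm
  · exact hc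
  · have : endN m T i = m := le_antisymm (endN_le h) hm
    exact Or.inl this

lemma endN_min {i t : ℕ} (h1 : i ≤ t) (h2 : t < endN m T i) : ¬ C m T t := by
  intro hc
  exact Nat.find_min (exP m T i) h2 ⟨h1, Or.inl hc⟩

lemma endN_le_of_C {i t : ℕ} (h1 : i ≤ t) (h2 : C m T t) : endN m T i ≤ t :=
  Nat.find_le ⟨h1, Or.inl h2⟩

lemma D_startN (v : ℕ) : D m T (startN m T v) :=
  Nat.findGreatest_spec (Nat.zero_le v) (D0 m T)

lemma startN_le (v : ℕ) : startN m T v ≤ v := Nat.findGreatest_le v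

lemma le_startN {k v : ℕ} (h1 : k ≤ v) (h2 : D m T k) : k ≤ startN m T v :=
  Nat.le_findGreatest h1 h2

lemma startN_max {k v : ℕ} (h1 : startN m T v < k) (h2 : k ≤ v) : ¬ D m T k :=
  Nat.findGreatest_is_greatest h1 h2

lemma f_le {i : ℕ} (h : i ≤ m) : f m T i ≤ m := by
  unfold f; split
  · exact endN_le h
  · omega

lemma g_le {v : ℕ} (h : v ≤ m) : g m T v ≤ m := by
  unfold g; split
  · exact le_trans (startN_le v) h
  · rename_i hc
    rcases Nat.lt_or_ge v m with h' | h'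
    · omega
    · exact absurd (Or.inl (le_antisymm h h')) hc

lemma gf {i : ℕ} (h : i ≤ m) : g m T (f m T i) = i := by
  unfold f g
  by_cases hD : D m T i
  · rw [if_pos hD, if_pos (C_endN h)]
    -- startN (endN i) = i
    refine le_antisymm ?_ (le_startN (le_endN i) hD)
    by_contra hlt
    push_neg at hlt
    set s := startN m T (endN m T i) with hs
    have hsD : D m T s := D_startN _
    have hs1 : 1 ≤ s := by omega
    have hsle : s ≤ endN m T i := startN_le _
    have : C m T (s - 1) := by
      rcases hsD with h0 | ⟨hlt', hmem⟩
      · omega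
      · exact Or.inr ⟨hlt', hmem⟩
    exact endN_min (i := i) (by omega) (by omega) this
  · rw [if_neg hD]
    have hi1 : 1 ≤ i := by
      by_contra h0
      exact hD (Or.inl (by omega))
    have : ¬ C m T (i - 1) := by
      intro hc
      rcases hc with h0 | ⟨hlt, hmem⟩
      · omega
      · exact hD (Or.inr ⟨hlt, hmem⟩)
    rw [if_neg this]
    omega

lemma fg {v : ℕ} (h : v ≤ m) : f m T (g m T v) = v := by
  unfold f g
  by_cases hC : C m T v
  · rw [if_pos hC, if_pos (D_startN v)]
    set s := startN m T v with hs
    have hsv : s ≤ v := startN_le v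
    refine le_antisymm (endN_le_of_C hsv hC) ?_
    by_contra hlt
    push_neg at hlt
    set e := endN m T s with he
    have hse : s ≤ e := le_endN s
    have heC : C m T e := C_endN (le_trans hsv h)
    have hem : e < m := by
      rcases Nat.lt_or_ge e m with h' | h'
      · exact h'
      · rcases heC with h0 | ⟨hlt', _⟩ <;> omega
    have heT : (⟨e, hem⟩ : Fin m) ∈ T := by
      rcases heC with h0 | ⟨hlt', hmem⟩
      · omega
      · exact hmem
    have : D m T (e + 1) := Or.inr ⟨by simpa using hem, by simpa using heT⟩
    exact startN_max (v := v) (k := e + 1) (by omega) (by omega) this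
  · rw [if_neg hC]
    have hvm : v < m := by
      rcases Nat.lt_or_ge v m with h' | h'
      · exact h'
      · exact absurd (Or.inl (le_antisymm h h')) hC
    have hnD : ¬ D m T (v + 1) := by
      intro hD
      rcases hD with h0 | ⟨hlt, hmem⟩
      · omega
      · exact hC (Or.inr ⟨by simpa using hlt, by simpa using hmem⟩)
    rw [if_neg hnD]
    omega


variable (m T)

def permT : Equiv.Perm (Fin (m+1)) where
  toFun i := ⟨f m T i, by have := f_le (m := m) (T := T) (Fin.is_le i); omega⟩
  invFun v := ⟨g m T v, by have := g_le (m := m) (T := T) (Fin.is_le v); omega⟩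
  left_inv i := by
    apply Fin.ext
    exact gf (Fin.is_le i)
  right_inv v := by
    apply Fin.ext
    exact fg (Fin.is_le v)

variable {m T}

lemma permT_val (x : ℕ) (h : x < m + 1) : ((permT m T ⟨x, h⟩ : Fin (m+1)) : ℕ) = f m T x := rfl

lemma f_upper {i : ℕ} : f m T i ≤ endN m T i := by
  unfold f; split
  · exact le_rfl
  · have := le_endN (m := m) (T := T) i; omega

lemma f_lower (i : ℕ) : startN m T i ≤ f m T i := by
  unfold f; split
  · exact le_trans (startN_le i) (le_endN i)
  · rename_i hD
    have h1 : startN m T i ≤ i := startN_le i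
    have h2 : startN m T i ≠ i := by
      intro he; exact hD (he ▸ D_startN i)
    omega

lemma DES {i j : ℕ} (him : i ≤ m) (hjm : j ≤ m) (hij : i < j) (hle : f m T j ≤ f m T i) :
    D m T i ∧ f m T i = endN m T i ∧ f m T j = j - 1 ∧ j ≤ endN m T i := by
  have h1 : startN m T j ≤ i := by
    by_contra hlt
    push_neg at hlt
    set s := startN m T j with hs
    have hsD : D m T s := D_startN j
    have hCs : C m T (s - 1) := by
      rcases hsD with h0 | ⟨hlt', hmem⟩
      · omega
      · exact Or.inr ⟨hlt', hmem⟩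
    have he : endN m T i ≤ s - 1 := endN_le_of_C (by omega) hCs
    have h2 := f_upper (m := m) (T := T) (i := i)
    have h3 := f_lower (m := m) (T := T) j
    have h4 := startN_le (m := m) (T := T) j
    omega
  have h2 : ∀ t, i ≤ t → t < j → ¬ C m T t := by
    intro t ht1 ht2 hc
    have htm : t < m := by omega
    have hD : D m T (t + 1) := by
      rcases hc with h0 | ⟨hlt', hmem⟩
      · omega
      · exact Or.inr ⟨by simpa using hlt', by simpa using hmem⟩
    have := le_startN (m := m) (T := T) (v := j) (by omega) hD
    omega
  have h3 : j ≤ endN m T i := by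
    by_contra hlt
    push_neg at hlt
    exact h2 _ (le_endN i) hlt (C_endN him)
  have h4 : ¬ D m T j := by
    intro hD
    rcases hD with h0 | ⟨hlt', hmem⟩
    · omega
    · exact h2 (j - 1) (by omega) (by omega) (Or.inr ⟨hlt', hmem⟩)
  have hfj : f m T j = j - 1 := if_neg h4
  have h5 : D m T i := by
    by_contra hD
    have hi0 : i ≠ 0 := fun h0 => hD (Or.inl h0)
    have hfi : f m T i = i - 1 := if_neg hD
    omega
  exact ⟨h5, if_pos h5, hfj, h3⟩

lemma permT_av321 : Avoids (permT m T) ![3, 2, 1] := by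
  rintro ⟨ff, hmono, hiff⟩
  have hab : ff 0 < ff 1 := hmono (by decide)
  have hbc : ff 1 < ff 2 := hmono (by decide)
  have h1 : permT m T (ff 1) < permT m T (ff 0) := (hiff 1 0).mp (by norm_num)
  have h2 : permT m T (ff 2) < permT m T (ff 1) := (hiff 2 1).mp (by decide)
  have hab' : ((ff 0 : Fin (m+1)) : ℕ) < ((ff 1 : Fin (m+1)) : ℕ) := hab
  have hbc' : ((ff 1 : Fin (m+1)) : ℕ) < ((ff 2 : Fin (m+1)) : ℕ) := hbc
  have e0 : ((permT m T (ff 0) : Fin (m+1)) : ℕ) = f m T ((ff 0 : Fin (m+1)) : ℕ) := rfl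
  have e1 : ((permT m T (ff 1) : Fin (m+1)) : ℕ) = f m T ((ff 1 : Fin (m+1)) : ℕ) := rfl
  have e2 : ((permT m T (ff 2) : Fin (m+1)) : ℕ) = f m T ((ff 2 : Fin (m+1)) : ℕ) := rfl
  rw [Fin.lt_def, e1, e0] at h1
  rw [Fin.lt_def, e2, e1] at h2
  obtain ⟨_, _, hfb, _⟩ := DES (Fin.is_le (ff 0)) (Fin.is_le (ff 1)) hab' (le_of_lt h1)
  obtain ⟨hDb, hfb', _, _⟩ := DES (Fin.is_le (ff 1)) (Fin.is_le (ff 2)) hbc' (le_of_lt h2)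
  have := le_endN (m := m) (T := T) ((ff 1 : Fin (m+1)) : ℕ)
  omega

lemma permT_av3142 : Avoids (permT m T) ![3, 1, 4, 2] := by
  rintro ⟨ff, hmono, hiff⟩
  have hab : ff 0 < ff 1 := hmono (by decide)
  have hbc : ff 1 < ff 2 := hmono (by decide)
  have hcd : ff 2 < ff 3 := hmono (by decide)
  have h1 : permT m T (ff 1) < permT m T (ff 3) := (hiff 1 3).mp (by decide)
  have h2 : permT m T (ff 3) < permT m T (ff 0) := (hiff 3 0).mp (by decide)
  have h3 : permT m T (ff 0) < permT m T (ff 2) := (hiff 0 2).mp (by decide)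
  have hab' : ((ff 0 : Fin (m+1)) : ℕ) < ((ff 1 : Fin (m+1)) : ℕ) := hab
  have hbc' : ((ff 1 : Fin (m+1)) : ℕ) < ((ff 2 : Fin (m+1)) : ℕ) := hbc
  have hcd' : ((ff 2 : Fin (m+1)) : ℕ) < ((ff 3 : Fin (m+1)) : ℕ) := hcd
  have e0 : ((permT m T (ff 0) : Fin (m+1)) : ℕ) = f m T ((ff 0 : Fin (m+1)) : ℕ) := rfl
  have e1 : ((permT m T (ff 1) : Fin (m+1)) : ℕ) = f m T ((ff 1 : Fin (m+1)) : ℕ) := rfl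
  have e2 : ((permT m T (ff 2) : Fin (m+1)) : ℕ) = f m T ((ff 2 : Fin (m+1)) : ℕ) := rfl
  have e3 : ((permT m T (ff 3) : Fin (m+1)) : ℕ) = f m T ((ff 3 : Fin (m+1)) : ℕ) := rfl
  rw [Fin.lt_def, e1, e3] at h1
  rw [Fin.lt_def, e3, e0] at h2
  rw [Fin.lt_def, e0, e2] at h3
  set a := ((ff 0 : Fin (m+1)) : ℕ)
  set b := ((ff 1 : Fin (m+1)) : ℕ)
  set c := ((ff 2 : Fin (m+1)) : ℕ)
  set d := ((ff 3 : Fin (m+1)) : ℕ)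
  have ham : a ≤ m := Fin.is_le _
  have hbm : b ≤ m := Fin.is_le _
  have hcm : c ≤ m := Fin.is_le _
  have hdm : d ≤ m := Fin.is_le _
  obtain ⟨hDa, hfa, hfb, hble⟩ := DES (T := T) ham hbm hab' (by omega)
  have hce : endN m T a < c := by
    by_contra hlt
    push_neg at hlt
    have h5 : endN m T c ≤ endN m T a := endN_le_of_C hlt (C_endN ham)
    have h6 := f_upper (m := m) (T := T) (i := c)
    omega
  have hem : endN m T a < m := by
    have := f_le (m := m) (T := T) hcm
    have := f_upper (m := m) (T := T) (i := c)
    omega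
  have heT : (⟨endN m T a, hem⟩ : Fin m) ∈ T := by
    rcases C_endN (T := T) ham with h0 | ⟨hlt', hmem⟩
    · omega
    · exact hmem
  have hDe : D m T (endN m T a + 1) := Or.inr ⟨by simpa using hem, by simpa using heT⟩
  have h7 : endN m T a + 1 ≤ startN m T d := le_startN (by omega) hDe
  have h8 := f_lower (m := m) (T := T) d
  omega

lemma permT_fish : IsFishburn (permT m T) := by
  rintro ⟨i, j, hij, hj, h1, h2, h3⟩
  rw [Fin.lt_def] at h1 h2
  have e0 : ∀ (x : ℕ) (h : x < m + 1), ((permT m T ⟨x, h⟩ : Fin (m+1)) : ℕ) = f m T x :=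
    fun _ _ => rfl
  rw [e0, e0] at h1
  rw [e0, e0] at h2
  rw [e0, e0] at h3
  obtain ⟨hDi, hfi, hfj, hje⟩ := DES (by omega) (by omega) (show i < j by omega) (le_of_lt h2)
  have hji : endN m T i = j := by omega
  have hiC : ¬ C m T i := endN_min le_rfl (by omega)
  have him : i < m := by omega
  have hiT : (⟨i, him⟩ : Fin m) ∉ T := by
    intro hmem
    exact hiC (Or.inr ⟨him, hmem⟩)
  have hnD : ¬ D m T (i + 1) := by
    intro hD
    rcases hD with h0 | ⟨hlt', hmem⟩
    · omega
    · exact hiT (by simpa using hmem)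
  have : f m T (i + 1) = i := by
    rw [f, if_neg hnD]
    omega
  omega

lemma mem_iff_f (t : ℕ) (ht : t < m) : (⟨t, ht⟩ : Fin m) ∈ T ↔ f m T (t + 1) ≠ t := by
  constructor
  · intro hmem
    have hD : D m T (t + 1) := Or.inr ⟨by simpa using ht, by simpa using hmem⟩
    rw [f, if_pos hD]
    have := le_endN (m := m) (T := T) (t + 1)
    omega
  · intro hne
    by_contra hmem
    have hnD : ¬ D m T (t + 1) := by
      intro hD
      rcases hD with h0 | ⟨hlt', hmem'⟩
      · omega
      · exact hmem (by simpa using hmem')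
    rw [f, if_neg hnD] at hne
    omega

lemma permT_inj : Function.Injective (fun S : Finset (Fin m) => permT m S) := by
  intro T1 T2 h
  simp only at h
  ext t
  have ht : (t : ℕ) < m := t.isLt
  have hval : f m T1 ((t : ℕ) + 1) = f m T2 ((t : ℕ) + 1) := by
    have := congrArg (fun π : Equiv.Perm (Fin (m+1)) =>
      ((π ⟨(t : ℕ) + 1, by omega⟩ : Fin (m+1)) : ℕ)) h
    simpa [permT_val] using this
  rw [show t = ⟨(t : ℕ), ht⟩ from rfl, mem_iff_f, mem_iff_f, hval]


section Complete

lemma sm3 {N : ℕ} {x y z : Fin N} (h1 : x < y) (h2 : y < z) : StrictMono ![x, y, z] := by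
  rw [Fin.strictMono_iff_lt_succ]
  intro i
  fin_cases i <;> simpa

lemma sm4 {N : ℕ} {x y z w : Fin N} (h1 : x < y) (h2 : y < z) (h3 : z < w) :
    StrictMono ![x, y, z, w] := by
  rw [Fin.strictMono_iff_lt_succ]
  intro i
  fin_cases i <;> simpa

lemma pat321_iff {N : ℕ} {π : Equiv.Perm (Fin N)} {x y z : Fin N}
    (h1 : (π y : ℕ) < (π x : ℕ)) (h2 : (π z : ℕ) < (π y : ℕ)) :
    ∀ i j, (![3, 2, 1] : Fin 3 → ℕ) i < ![3, 2, 1] j ↔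
      π (![x, y, z] i) < π (![x, y, z] j) := by
  intro i j
  fin_cases i <;> fin_cases j <;>
    simp only [show ∀ h, (⟨0, h⟩ : Fin 3) = 0 from fun _ => rfl,
      show ∀ h, (⟨1, h⟩ : Fin 3) = 1 from fun _ => rfl,
      show ∀ h, (⟨2, h⟩ : Fin 3) = 2 from fun _ => rfl,
      Matrix.cons_val_zero, Matrix.cons_val_one, Matrix.head_cons,
      Matrix.cons_val_two, Matrix.tail_cons, Fin.lt_def] <;>
    omega

lemma pat3142_iff {N : ℕ} {π : Equiv.Perm (Fin N)} {x y z w : Fin N}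
    (h1 : (π y : ℕ) < (π w : ℕ)) (h2 : (π w : ℕ) < (π x : ℕ)) (h3 : (π x : ℕ) < (π z : ℕ)) :
    ∀ i j, (![3, 1, 4, 2] : Fin 4 → ℕ) i < ![3, 1, 4, 2] j ↔
      π (![x, y, z, w] i) < π (![x, y, z, w] j) := by
  intro i j
  fin_cases i <;> fin_cases j <;>
    simp only [show ∀ h, (⟨0, h⟩ : Fin 4) = 0 from fun _ => rfl,
      show ∀ h, (⟨1, h⟩ : Fin 4) = 1 from fun _ => rfl,
      show ∀ h, (⟨2, h⟩ : Fin 4) = 2 from fun _ => rfl,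
      show ∀ h, (⟨3, h⟩ : Fin 4) = 3 from fun _ => rfl,
      Matrix.cons_val_zero, Matrix.cons_val_one, Matrix.head_cons,
      Matrix.cons_val_two, Matrix.tail_cons, Matrix.cons_val_three, Fin.lt_def] <;>
    omega

variable {m : ℕ} (π : Equiv.Perm (Fin (m+1)))

/-- the permutation as a function on ℕ -/
def p (i : ℕ) : ℕ := if h : i < m + 1 then ((π ⟨i, h⟩ : Fin (m+1)) : ℕ) else i

lemma p_eq {i : ℕ} (h : i < m + 1) : p π i = ((π ⟨i, h⟩ : Fin (m+1)) : ℕ) := dif_pos h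

lemma p_le {i : ℕ} (h : i ≤ m) : p π i ≤ m := by
  rw [p_eq π (by omega)]
  exact Fin.is_le _

lemma pinj {a b : ℕ} (ha : a ≤ m) (hb : b ≤ m) (h : p π a = p π b) : a = b := by
  have ha' : a < m + 1 := by omega
  have hb' : b < m + 1 := by omega
  rw [p_eq π ha', p_eq π hb'] at h
  have := π.injective (Fin.ext h)
  exact congrArg Fin.val this

lemma psurj {v : ℕ} (hv : v ≤ m) : ∃ a, a ≤ m ∧ p π a = v := by
  refine ⟨(π.symm ⟨v, by omega⟩ : Fin (m+1)), Fin.is_le _, ?_⟩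
  rw [p_eq π (by omega)]
  simp

lemma mk321 (hA : Avoids π ![3, 2, 1]) :
    ∀ a b c, a < b → b < c → c ≤ m → p π c < p π b → p π b < p π a → False := by
  intro a b c hab hbc hcm h1 h2
  have ha' : a < m + 1 := by omega
  have hb' : b < m + 1 := by omega
  have hc' : c < m + 1 := by omega
  simp only [p_eq π ha', p_eq π hb', p_eq π hc'] at h1 h2
  exact hA ⟨![⟨a, ha'⟩, ⟨b, hb'⟩, ⟨c, hc'⟩],
    sm3 (Fin.mk_lt_mk.mpr hab) (Fin.mk_lt_mk.mpr hbc), pat321_iff h2 h1⟩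

set_option maxHeartbeats 1000000 in
lemma mk3142 (hA : Avoids π ![3, 1, 4, 2]) :
    ∀ a b c d, a < b → b < c → c < d → d ≤ m →
      p π b < p π d → p π d < p π a → p π a < p π c → False := by
  intro a b c d hab hbc hcd hdm h1 h2 h3
  have ha' : a < m + 1 := by omega
  have hb' : b < m + 1 := by omega
  have hc' : c < m + 1 := by omega
  have hd' : d < m + 1 := by omega
  simp only [p_eq π ha', p_eq π hb', p_eq π hc', p_eq π hd'] at h1 h2 h3
  apply hA
  refine ⟨![⟨a, ha'⟩, ⟨b, hb'⟩, ⟨c, hc'⟩, ⟨d, hd'⟩],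
    sm4 (Fin.mk_lt_mk.mpr hab) (Fin.mk_lt_mk.mpr hbc) (Fin.mk_lt_mk.mpr hcd), ?_⟩
  exact pat3142_iff h1 h2 h3

lemma mkfish (hF : IsFishburn π) :
    ∀ i j, i + 1 < j → j ≤ m → p π i < p π (i+1) → p π j < p π i → p π i = p π j + 1 → False := by
  intro i j hij hjm h1 h2 h3
  simp only [p_eq π (show i < m+1 by omega), p_eq π (show i+1 < m+1 by omega),
    p_eq π (show j < m+1 by omega)] at h1 h2 h3
  exact hF ⟨i, j, hij, by omega, Fin.lt_def.mpr h1, Fin.lt_def.mpr h2, h3⟩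

/-- positions `< i` carry exactly the values `< i` -/
def Start (i : ℕ) : Prop := ∀ a, a < i → p π a < i

lemma start_lower {i : ℕ} (hS : Start π i) (him : i ≤ m + 1) :
    ∀ a, i ≤ a → a ≤ m → i ≤ p π a := by
  intro a ha1 ha2
  by_contra hlt
  push_neg at hlt
  have hsub : (Finset.range i).image (p π) ⊆ Finset.range i := by
    intro v hv
    simp only [Finset.mem_image, Finset.mem_range] at hv ⊢
    obtain ⟨b, hb, rfl⟩ := hv
    exact hS b hb
  have hcard : ((Finset.range i).image (p π)).card = i := by
    rw [Finset.card_image_of_injOn, Finset.card_range]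
    intro x hx y hy hxy
    simp only [Finset.mem_coe, Finset.mem_range] at hx hy
    exact pinj π (by omega) (by omega) hxy
  have heq : (Finset.range i).image (p π) = Finset.range i :=
    Finset.eq_of_subset_of_card_le hsub (by rw [hcard, Finset.card_range])
  have : p π a ∈ (Finset.range i).image (p π) := by
    rw [heq]; simpa using hlt
  simp only [Finset.mem_image, Finset.mem_range] at this
  obtain ⟨b, hb, hba⟩ := this
  have := pinj π (by omega) (by omega) hba
  omega

lemma blockstep {i : ℕ} (hF : IsFishburn π) (hA1 : Avoids π ![3, 2, 1])
    (hA2 : Avoids π ![3, 1, 4, 2]) (hS : Start π i) (him : i ≤ m) :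
    ∀ k, 1 ≤ k → i + k ≤ p π i → p π (i + k) = i + k - 1 := by
  intro k
  induction k using Nat.strong_induction_on with
  | _ k IH =>
  intro hk1 hk2
  have hpim : p π i ≤ m := p_le π him
  have hikm : i + k ≤ m := by omega
  have hv : i ≤ p π (i + k) := start_lower π hS (by omega) _ (by omega) hikm
  have hvm : p π (i + k) ≤ m := p_le π hikm
  have hvne : p π (i + k) ≠ p π i := by
    intro he
    have := pinj π hikm him he
    omega
  have hlow : i + k - 1 ≤ p π (i + k) := by
    by_contra hlt
    push_neg at hlt
    have ht : p π (i + (p π (i + k) - i + 1)) = p π (i + k) := by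
      rw [IH (p π (i + k) - i + 1) (by omega) (by omega) (by omega)]
      omega
    have := pinj π (by omega) hikm ht
    omega
  by_contra hne
  have hvgt : i + k ≤ p π (i + k) := by omega
  obtain ⟨q, hqm, hq⟩ := psurj π (show i + k - 1 ≤ m by omega)
  have hqbig : i + k < q := by
    rcases Nat.lt_or_ge q i with h' | h'
    · have := hS q h'; omega
    · rcases Nat.lt_or_ge (i + k) q with h'' | h''
      · exact h''
      · exfalso
        rcases Nat.eq_or_lt_of_le h' with rfl | hgt
        · omega
        · -- i < q ≤ i + k
          have ht : q - i < k ∨ q - i = k := by omega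
          rcases ht with ht | ht
          · have := IH (q - i) (by omega) (by omega) (by omega)
            rw [show i + (q - i) = q by omega] at this
            omega
          · rw [show q = i + k by omega] at hq
            omega
  rcases Nat.lt_or_ge (p π (i + k)) (p π i) with hcase | hcase
  · have e1 : i < i + k := by omega
    have e2 : p π q < p π (i + k) := by omega
    exact mk321 π hA1 i (i + k) q e1 hqbig hqm e2 hcase
  · have hgt : p π i < p π (i + k) := by omega
    rcases Nat.lt_or_ge 1 k with hk2' | hk1'
    · have hpi1 : p π (i + 1) = i := by
        have := IH 1 (by omega) le_rfl (by omega)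
        omega
      have e1 : p π (i + 1) < p π q := by omega
      have e2 : p π q < p π i := by omega
      have e3 : p π i < p π (i + k) := hgt
      exact mk3142 π hA2 i (i + 1) (i + k) q (by omega) (by omega) hqbig hqm e1 e2 e3
    · have hk : k = 1 := by omega
      subst hk
      obtain ⟨q', hq'm, hq'⟩ := psurj π (show p π i - 1 ≤ m by omega)
      have hq'big : i + 1 < q' := by
        rcases Nat.lt_or_ge q' i with h' | h'
        · have := hS q' h'; omega
        · rcases Nat.eq_or_lt_of_le h' with rfl | hgt'
          · omega
          · rcases Nat.eq_or_lt_of_le (show i + 1 ≤ q' by omega) with rfl | hgt''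
            · omega
            · omega
      exact mkfish π hF i q' hq'big hq'm (by omega) (by omega) (by omega)

lemma start_succ {i : ℕ} (hF : IsFishburn π) (hA1 : Avoids π ![3, 2, 1])
    (hA2 : Avoids π ![3, 1, 4, 2]) (hS : Start π i) (him : i ≤ m) :
    Start π (p π i + 1) := by
  intro a ha
  have hpi : i ≤ p π i := start_lower π hS (by omega) i le_rfl him
  rcases Nat.lt_or_ge a i with h' | h'
  · have := hS a h'; omega
  · rcases Nat.eq_or_lt_of_le h' with rfl | hgt
    · omega
    · have := blockstep π hF hA1 hA2 hS him (a - i) (by omega) (by omega)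
      rw [show i + (a - i) = a by omega] at this
      omega

lemma cover (hF : IsFishburn π) (hA1 : Avoids π ![3, 2, 1]) (hA2 : Avoids π ![3, 1, 4, 2]) :
    ∀ i, i ≤ m → (Start π i ∨ ∃ s, s < i ∧ Start π s ∧ i ≤ p π s) := by
  intro i
  induction i with
  | zero => intro _; left; intro a ha; omega
  | succ i IH =>
    intro hi
    rcases IH (by omega) with hS | ⟨s, hs, hSs, hle⟩
    · have hpi : i ≤ p π i := start_lower π hS (by omega) i le_rfl (by omega)
      rcases Nat.eq_or_lt_of_le hpi with he | hgt
      · left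
        have := start_succ π hF hA1 hA2 hS (by omega)
        rwa [← he] at this
      · right; exact ⟨i, by omega, hS, by omega⟩
    · rcases Nat.eq_or_lt_of_le hle with he | hgt
      · left
        have := start_succ π hF hA1 hA2 hSs (by omega)
        rwa [← he] at this
      · right; exact ⟨s, by omega, hSs, by omega⟩

/-- recover the cut set from the permutation -/
def Tof : Finset (Fin m) := Finset.univ.filter (fun t : Fin m => p π ((t : ℕ) + 1) ≠ (t : ℕ))

lemma mem_Tof {t : ℕ} (ht : t < m) : (⟨t, ht⟩ : Fin m) ∈ Tof π ↔ p π (t + 1) ≠ t := by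
  simp [Tof]

lemma complete (hF : IsFishburn π) (hA1 : Avoids π ![3, 2, 1])
    (hA2 : Avoids π ![3, 1, 4, 2]) : π = permT m (Tof π) := by
  apply Equiv.ext
  intro x
  apply Fin.ext
  have hx : (x : ℕ) ≤ m := Fin.is_le x
  set i := (x : ℕ) with hidef
  have hxx : x = ⟨i, by omega⟩ := rfl
  rw [hxx, permT_val, ← p_eq π (by omega)]
  have hD_iff : D m (Tof π) i ↔ (i = 0 ∨ p π i ≠ i - 1) := by
    constructor
    · rintro (h0 | ⟨hlt, hmem⟩)
      · exact Or.inl h0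
      · rcases Nat.eq_zero_or_pos i with h0 | hpos
        · exact Or.inl h0
        · rw [mem_Tof π hlt, show i - 1 + 1 = i by omega] at hmem
          exact Or.inr (by omega)
    · rintro (h0 | hne)
      · exact Or.inl h0
      · rcases Nat.eq_zero_or_pos i with h0 | hpos
        · exact Or.inl h0
        · refine Or.inr ⟨by omega, ?_⟩
          rw [mem_Tof π (by omega), show i - 1 + 1 = i by omega]
          omega
  by_cases hD : D m (Tof π) i
  · -- i is a start; show p π i = endN
    have hStart : Start π i := by
      rcases cover π hF hA1 hA2 i hx with hS | ⟨s, hs, hSs, hle⟩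
      · exact hS
      · exfalso
        have := blockstep π hF hA1 hA2 hSs (by omega) (i - s) (by omega) (by omega)
        rw [show s + (i - s) = i by omega] at this
        rcases hD_iff.mp hD with h0 | hne
        · omega
        · omega
    have hpi : i ≤ p π i := start_lower π hStart (by omega) i le_rfl hx
    have hpim : p π i ≤ m := p_le π hx
    have hCpi : C m (Tof π) (p π i) := by
      rcases Nat.eq_or_lt_of_le hpim with he | hlt
      · exact Or.inl he
      · refine Or.inr ⟨hlt, ?_⟩
        rw [mem_Tof π hlt]
        have hS' : Start π (p π i + 1) := start_succ π hF hA1 hA2 hStart hx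
        have := start_lower π hS' (by omega) (p π i + 1) le_rfl (by omega)
        omega
    have hle1 : endN m (Tof π) i ≤ p π i := endN_le_of_C hpi hCpi
    have hge1 : p π i ≤ endN m (Tof π) i := by
      by_contra hlt
      push_neg at hlt
      have hC := C_endN (T := Tof π) hx
      have hiend := le_endN (m := m) (T := Tof π) i
      rcases hC with h0 | ⟨hlt', hmem⟩
      · omega
      · rw [mem_Tof π hlt'] at hmem
        have := blockstep π hF hA1 hA2 hStart hx (endN m (Tof π) i + 1 - i) (by omega) (by omega)
        rw [show i + (endN m (Tof π) i + 1 - i) = endN m (Tof π) i + 1 by omega] at this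
        omega
    rw [f, if_pos hD]
    omega
  · rw [f, if_neg hD]
    rcases hD_iff.not.mp hD with h
    push_neg at h
    omega

end Complete

end FB

end FBsec

theorem fishburn_321_3142 (n : ℕ) (hn : 1 ≤ n) :
    {π : Equiv.Perm (Fin n) | IsFishburn π ∧ Avoids π ![3, 2, 1] ∧ Avoids π ![3, 1, 4, 2]}.ncard = 2 ^ (n - 1) := by
  obtain ⟨m, rfl⟩ : ∃ m, n = m + 1 := ⟨n - 1, by omega⟩
  have hset : {π : Equiv.Perm (Fin (m+1)) |
      IsFishburn π ∧ Avoids π ![3, 2, 1] ∧ Avoids π ![3, 1, 4, 2]}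
      = Set.range (fun T : Finset (Fin m) => FB.permT m T) := by
    ext π
    constructor
    · rintro ⟨h1, h2, h3⟩
      exact ⟨FB.Tof π, (FB.complete π h1 h2 h3).symm⟩
    · rintro ⟨T, rfl⟩
      exact ⟨FB.permT_fish, FB.permT_av321, FB.permT_av3142⟩
  have himg : Set.range (fun T : Finset (Fin m) => FB.permT m T)
      = ↑((Finset.univ : Finset (Finset (Fin m))).image (fun T => FB.permT m T)) := by
    simp [Finset.coe_image]
  rw [hset, himg, Set.ncard_coe_finset,
    Finset.card_image_of_injective _ FB.permT_inj, Finset.card_univ]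
  simp
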